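/- If U is a stable ordered-union ultrafilter on FIN, then U is strategic: for every A ∈ FIN^[∞] with ⟨A⟩ ∈ U and every strategy α for player II in the Gowers game G[A], there is an outcome B of α with ⟨B⟩ ∈ U. -/

import Mathlib

namespace BlockPaper

variable {F : Type} [Field F]

/-- `X` is an infinite block sequence in `E = ⊕ₙ F`. -/
def IsBlock (X : ℕ → (ℕ →₀ F)) : Prop :=
  (∀ n, X n ≠ 0) ∧ ∀ n, ∀ i ∈ (X n).support, ∀ j ∈ (X (n + 1)).support, i < j

/-- `⟨X⟩`: the linear span of the entries of `X`, with `0` removed. -/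
def spanSet (X : ℕ → (ℕ →₀ F)) : Set (ℕ →₀ F) :=
  {v | v ≠ 0 ∧ v ∈ Submodule.span F (Set.range X)}

/-- `⟨X/n⟩`: the span (minus `0`) of the entries of `X` whose supports lie entirely above `n`. -/
def tailSpanSet (X : ℕ → (ℕ →₀ F)) (n : ℕ) : Set (ℕ →₀ F) :=
  {v | v ≠ 0 ∧ v ∈ Submodule.span F {x : ℕ →₀ F | (∃ k, X k = x) ∧ ∀ i ∈ x.support, n < i}}

/-- `X ⪯ Y`. -/
def PLE (X Y : ℕ → (ℕ →₀ F)) : Prop := spanSet X ⊆ spanSet Y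

/-- `X ⪯* Y`. -/
def PLEs (X Y : ℕ → (ℕ →₀ F)) : Prop := ∃ n, tailSpanSet X n ⊆ spanSet Y

/-- A block filter on `E`: a proper filter of subsets of `E ∖ {0}` containing all
finite-codimensional subspaces (minus `0`) and with a base of sets `⟨X⟩`, `X ∈ E^[∞]`. -/
structure BlockFilter (F : Type) [Field F] where
  sets : Set (Set (ℕ →₀ F))
  nonzero : ∀ S ∈ sets, ∀ v ∈ S, v ≠ 0
  proper : ∅ ∉ sets
  upward : ∀ S ∈ sets, ∀ T : Set (ℕ →₀ F), (∀ v ∈ T, v ≠ 0) → S ⊆ T → T ∈ sets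
  inter : ∀ S ∈ sets, ∀ T ∈ sets, S ∩ T ∈ sets
  codim : ∀ V : Submodule F (ℕ →₀ F), Module.Finite F ((ℕ →₀ F) ⧸ V) →
    {v : ℕ →₀ F | v ≠ 0 ∧ v ∈ V} ∈ sets
  blockBase : ∀ S ∈ sets, ∃ X : ℕ → (ℕ →₀ F),
    IsBlock X ∧ spanSet X ∈ sets ∧ spanSet X ⊆ S

/-- `D ⊆ E` is `𝓕`-dense. -/
def FDense (𝓕 : BlockFilter F) (D : Set (ℕ →₀ F)) : Prop :=
  ∀ X : ℕ → (ℕ →₀ F), IsBlock X → spanSet X ∈ 𝓕.sets →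
    ∃ V : Submodule F (ℕ →₀ F), ¬ Module.Finite F V ∧
      (V : Set (ℕ →₀ F)) \ {0} ⊆ spanSet X ∩ D

/-- `𝓕` is full: every `𝓕`-dense set belongs to `𝓕`. -/
def Full (𝓕 : BlockFilter F) : Prop :=
  ∀ D : Set (ℕ →₀ F), FDense 𝓕 D → D \ {0} ∈ 𝓕.sets

/-- `𝓕` is a `(p)`-filter. -/
def PFilter (𝓕 : BlockFilter F) : Prop :=
  ∀ Xs : ℕ → ℕ → (ℕ →₀ F), (∀ n, IsBlock (Xs n) ∧ spanSet (Xs n) ∈ 𝓕.sets) →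
    ∃ X : ℕ → (ℕ →₀ F), IsBlock X ∧ spanSet X ∈ 𝓕.sets ∧ ∀ n, PLEs X (Xs n)

/-- `𝓕` is a `(p⁺)`-filter: full and a `(p)`-filter. -/
def PPlus (𝓕 : BlockFilter F) : Prop := Full 𝓕 ∧ PFilter 𝓕

/-- A finite block sequence in `E`, as a list. -/
def IsBlockList (l : List (ℕ →₀ F)) : Prop :=
  (∀ v ∈ l, v ≠ 0) ∧
    l.Chain' (fun u v : ℕ →₀ F => ∀ i ∈ u.support, ∀ j ∈ v.support, i < j)

/-- `𝓕` is a strong `(p)`-filter: any family `(X_x⃗)` indexed by finite block sequences,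
with each `⟨X_x⃗⟩ ∈ 𝓕`, has a diagonalization `X` with `X/x⃗ ⪯ X_x⃗` for all finite initial
segments `x⃗` of `X`. -/
def StrongP (𝓕 : BlockFilter F) : Prop :=
  ∀ Xs : List (ℕ →₀ F) → ℕ → (ℕ →₀ F),
    (∀ l, IsBlockList l → IsBlock (Xs l) ∧ spanSet (Xs l) ∈ 𝓕.sets) →
    ∃ X : ℕ → (ℕ →₀ F), IsBlock X ∧ spanSet X ∈ 𝓕.sets ∧
      ∀ k : ℕ, PLE (fun m => X (m + k)) (Xs (List.ofFn fun i : Fin k => X i))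

/-- The outcome of a strategy (for II) against a sequence of opposing moves:
the `k`-th value is the strategy applied to the first `k+1` opposing moves. -/
def outcomeOf {α β : Type*} (st : List α → β) (Ys : ℕ → α) : ℕ → β :=
  fun k => st (List.ofFn fun i : Fin (k + 1) => Ys i)

/-- A legal move for player I in the Gowers game `G[X]`. -/
def LegalG (X Y : ℕ → (ℕ →₀ F)) : Prop := IsBlock Y ∧ PLE Y X

/-- A legal move for player I in the restricted Gowers game `G_𝓕[X]`. -/
def LegalGF (𝓕 : BlockFilter F) (X Y : ℕ → (ℕ →₀ F)) : Prop :=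
  IsBlock Y ∧ PLE Y X ∧ spanSet Y ∈ 𝓕.sets

/-- `α` is a strategy for player II in a Gowers-type game whose legal moves for I are
given by `legal`: against any sequence of legal I-moves, the outcome is a block
sequence whose `k`-th entry lies in the span of I's `k`-th move. -/
def IsStratII (legal : (ℕ → (ℕ →₀ F)) → Prop)
    (α : List (ℕ → (ℕ →₀ F)) → (ℕ →₀ F)) : Prop :=
  ∀ Ys : ℕ → ℕ → (ℕ →₀ F), (∀ k, legal (Ys k)) →
    IsBlock (outcomeOf α Ys) ∧ ∀ k, outcomeOf α Ys k ∈ spanSet (Ys k)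

/-- `𝓕` is strategic. -/
def Strategic (𝓕 : BlockFilter F) : Prop :=
  ∀ X : ℕ → (ℕ →₀ F), IsBlock X → spanSet X ∈ 𝓕.sets →
    ∀ α, IsStratII (LegalG X) α →
      ∃ Ys : ℕ → ℕ → (ℕ →₀ F), (∀ k, LegalG X (Ys k)) ∧
        spanSet (outcomeOf α Ys) ∈ 𝓕.sets

/-- `𝓕` is `+`-strategic. -/
def PlusStrategic (𝓕 : BlockFilter F) : Prop :=
  ∀ X : ℕ → (ℕ →₀ F), IsBlock X → spanSet X ∈ 𝓕.sets →
    ∀ α, IsStratII (LegalGF 𝓕 X) α →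
      ∃ Ys : ℕ → ℕ → (ℕ →₀ F), (∀ k, LegalGF 𝓕 X (Ys k)) ∧
        spanSet (outcomeOf α Ys) ∈ 𝓕.sets

/-- A legal finite position (list of II's moves so far) in a play where I follows `σ`. -/
def LegalPos (σ : List (ℕ →₀ F) → ℕ → (ℕ →₀ F)) (l : List (ℕ →₀ F)) : Prop :=
  IsBlockList l ∧ ∀ k, (h : k < l.length) → l.get ⟨k, h⟩ ∈ spanSet (σ (l.take k))

/-- `σ` is a strategy for player I in the restricted Gowers game `G_𝓕[X]`. -/
def IsStratIGF (𝓕 : BlockFilter F) (X : ℕ → (ℕ →₀ F))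
    (σ : List (ℕ →₀ F) → ℕ → (ℕ →₀ F)) : Prop :=
  ∀ l, LegalPos σ l → LegalGF 𝓕 X (σ l)

/-- `ys` is (the sequence of II's moves of) an infinite play against I's strategy `σ`
in a Gowers-type game; its outcome is `ys` itself. -/
def PlayAgainstI (σ : List (ℕ →₀ F) → ℕ → (ℕ →₀ F)) (ys : ℕ → (ℕ →₀ F)) : Prop :=
  IsBlock ys ∧ ∀ k, ys k ∈ spanSet (σ (List.ofFn fun i : Fin k => ys i))

/-- `ys` is an infinite play against I's strategy `σ` in the asymptotic game `F[X]`. -/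
def PlayAgainstIAsymp (X : ℕ → (ℕ →₀ F)) (σ : List (ℕ →₀ F) → ℕ)
    (ys : ℕ → (ℕ →₀ F)) : Prop :=
  IsBlock ys ∧ ∀ k, ys k ∈ spanSet X ∧
    ∀ i ∈ (ys k).support, σ (List.ofFn fun j : Fin k => ys j) < i

/-- `FIN`: nonempty finite subsets of `ℕ`. -/
abbrev FIN := {s : Finset ℕ // s.Nonempty}

/-- An infinite block sequence in `FIN`. -/
def IsBlockF (A : ℕ → Finset ℕ) : Prop :=
  (∀ n, (A n).Nonempty) ∧ ∀ n, ∀ i ∈ A n, ∀ j ∈ A (n + 1), i < j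

/-- `⟨A⟩`: unions of finitely many (at least one) entries of `A`. -/
def finUnions (A : ℕ → Finset ℕ) : Set (Finset ℕ) :=
  {b | ∃ G : Finset ℕ, G.Nonempty ∧ b = G.sup A}

/-- `⟨A/n⟩`: unions of finitely many entries of `A` contained in `(n, ∞)`. -/
def finUnionsAbove (A : ℕ → Finset ℕ) (n : ℕ) : Set (Finset ℕ) :=
  {b | ∃ G : Finset ℕ, G.Nonempty ∧ (∀ k ∈ G, ∀ i ∈ A k, n < i) ∧ b = G.sup A}

/-- `A ⪯ B` in `FIN`. -/
def PLEF (A B : ℕ → Finset ℕ) : Prop := finUnions A ⊆ finUnions B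

/-- `A ⪯* B` in `FIN`. -/
def PLEsF (A B : ℕ → Finset ℕ) : Prop := ∃ n, finUnionsAbove A n ⊆ finUnions B

/-- Lift a set of finite subsets of `ℕ` to a set of elements of `FIN`. -/
def liftFIN (S : Set (Finset ℕ)) : Set FIN := {a | (a : Finset ℕ) ∈ S}

/-- `U` is an ordered-union ultrafilter on `FIN`. -/
def OrderedUnion (U : Ultrafilter FIN) : Prop :=
  ∀ S ∈ U, ∃ A : ℕ → Finset ℕ, IsBlockF A ∧
    liftFIN (finUnions A) ∈ U ∧ liftFIN (finUnions A) ⊆ S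

/-- `U` is stable. -/
def Stable (U : Ultrafilter FIN) : Prop :=
  ∀ As : ℕ → ℕ → Finset ℕ, (∀ n, IsBlockF (As n) ∧ liftFIN (finUnions (As n)) ∈ U) →
    ∃ B : ℕ → Finset ℕ, IsBlockF B ∧ liftFIN (finUnions B) ∈ U ∧ ∀ n, PLEsF B (As n)

/-- `supp(X)`: the sequence of supports of the entries of `X`. -/
def suppSeq (X : ℕ → (ℕ →₀ F)) : ℕ → Finset ℕ := fun k => (X k).support

/-- `supp(𝓕)`: the collection of `A ⊆ FIN` containing `{supp v : v ∈ S}` for some `S ∈ 𝓕`. -/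
def suppFilter (𝓕 : BlockFilter F) : Set (Set FIN) :=
  {A | ∃ S ∈ 𝓕.sets, ∀ a : FIN, (∃ v ∈ S, (a : Finset ℕ) = v.support) → a ∈ A}

/-- A finite block sequence in `FIN`, as a list. -/
def IsBlockListF (l : List (Finset ℕ)) : Prop :=
  (∀ a ∈ l, a.Nonempty) ∧
    l.Chain' (fun a b : Finset ℕ => ∀ i ∈ a, ∀ j ∈ b, i < j)

end BlockPaper
open BlockPaper

/-- `α` is a strategy for player II in a Gowers-type game on `FIN` whose legal moves
for player I are given by `legal`. -/
def IsStratIIF (legal : (ℕ → Finset ℕ) → Prop)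
    (α : List (ℕ → Finset ℕ) → Finset ℕ) : Prop :=
  ∀ Bs : ℕ → ℕ → Finset ℕ, (∀ k, legal (Bs k)) →
    IsBlockF (outcomeOf α Bs) ∧ ∀ k, outcomeOf α Bs k ∈ finUnions (Bs k)

section Stmt6Aux
open BlockPaper

/-! ### Basic lemmas about block sequences and `finUnions` -/

theorem entry_mem_finUnions (Y : ℕ → Finset ℕ) (k : ℕ) : Y k ∈ finUnions Y :=
  ⟨{k}, Finset.singleton_nonempty k, Finset.sup_singleton.symm⟩

theorem union_mem_finUnions {Y : ℕ → Finset ℕ} {u v : Finset ℕ}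
    (hu : u ∈ finUnions Y) (hv : v ∈ finUnions Y) : u ∪ v ∈ finUnions Y := by
  obtain ⟨G, hG, rfl⟩ := hu
  obtain ⟨H, hH, rfl⟩ := hv
  refine ⟨G ∪ H, ?_, ?_⟩
  · exact hG.mono Finset.subset_union_left
  · rw [Finset.sup_union]; rfl


theorem subset_sup {G : Finset ℕ} {Y : ℕ → Finset ℕ} {k : ℕ} (hk : k ∈ G) :
    Y k ⊆ G.sup Y := by
  intro x hx
  exact Finset.le_sup (f := Y) hk hx

theorem nonempty_of_mem_finUnions {Y : ℕ → Finset ℕ} (hY : IsBlockF Y) {b : Finset ℕ}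
    (hb : b ∈ finUnions Y) : b.Nonempty := by
  obtain ⟨G, hG, rfl⟩ := hb
  obtain ⟨k, hk⟩ := hG
  exact (hY.1 k).mono (subset_sup hk)

theorem mem_finUnionsAbove {Y : ℕ → Finset ℕ} {b : Finset ℕ} {n : ℕ}
    (hb : b ∈ finUnions Y) (h : ∀ x ∈ b, n < x) : b ∈ finUnionsAbove Y n := by
  obtain ⟨G, hG, rfl⟩ := hb
  exact ⟨G, hG, fun k hk i hi => h i (subset_sup hk hi), rfl⟩

theorem blockF_ge {Y : ℕ → Finset ℕ} (hY : IsBlockF Y) : ∀ k, ∀ x ∈ Y k, k ≤ x := by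
  intro k
  induction k with
  | zero => intro x _; exact Nat.zero_le x
  | succ k ih =>
    intro x hx
    obtain ⟨y, hy⟩ := hY.1 k
    exact Nat.succ_le_of_lt (lt_of_le_of_lt (ih y hy) (hY.2 k y hy x hx))

theorem blockF_cross {Y : ℕ → Finset ℕ} (hY : IsBlockF Y) :
    ∀ {k l : ℕ}, k < l → ∀ i ∈ Y k, ∀ j ∈ Y l, i < j := by
  intro k l
  induction l with
  | zero => omega
  | succ l ih =>
    intro hkl i hi j hj
    rcases Nat.lt_succ_iff_lt_or_eq.mp hkl with h | h
    · obtain ⟨y, hy⟩ := hY.1 l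
      exact lt_trans (ih h i hi y hy) (hY.2 l y hy j hj)
    · subst h; exact hY.2 k i hi j hj

/-! ### Ultrafilter utilities -/

theorem liftFIN_inter (S T : Set (Finset ℕ)) :
    liftFIN (S ∩ T) = liftFIN S ∩ liftFIN T := rfl

theorem liftFIN_compl (S : Set (Finset ℕ)) :
    liftFIN {b | b ∉ S} = (liftFIN S)ᶜ := rfl

theorem exists_block_subset (U : Ultrafilter FIN) (hOU : OrderedUnion U)
    {S : Set (Finset ℕ)} (hS : liftFIN S ∈ U) :
    ∃ Y : ℕ → Finset ℕ, IsBlockF Y ∧ liftFIN (finUnions Y) ∈ U ∧ finUnions Y ⊆ S := by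
  obtain ⟨Y, hYb, hYU, hsub⟩ := hOU _ hS
  refine ⟨Y, hYb, hYU, fun b hb => ?_⟩
  have hne : b.Nonempty := nonempty_of_mem_finUnions hYb hb
  exact hsub (show ((⟨b, hne⟩ : FIN) : Finset ℕ) ∈ finUnions Y from hb)

theorem allAbove_mem (U : Ultrafilter FIN) (hOU : OrderedUnion U) (N : ℕ) :
    liftFIN {b : Finset ℕ | ∀ x ∈ b, N < x} ∈ U := by
  by_contra hno
  have hc : liftFIN {b : Finset ℕ | ¬ ∀ x ∈ b, N < x} ∈ U := by
    have : (liftFIN {b : Finset ℕ | ∀ x ∈ b, N < x})ᶜ ∈ U :=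
      Ultrafilter.compl_mem_iff_notMem.mpr hno
    exact this
  obtain ⟨Y, hYb, _, hsub⟩ := exists_block_subset U hOU hc
  have h1 : Y (N + 1) ∈ finUnions Y := entry_mem_finUnions Y (N + 1)
  have h2 := hsub h1
  exact h2 (fun x hx => lt_of_lt_of_le (Nat.lt_succ_self N) (blockF_ge hYb (N + 1) x hx))

end Stmt6Aux
section Stmt6Aux2
open BlockPaper

/-! ### Interval system generated by a function -/

/-- Iterated interval endpoints for `f`. -/
def tInt (f : ℕ → ℕ) : ℕ → ℕ
  | 0 => 0
  | k + 1 => tInt f k + f (tInt f k) + 1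

theorem tInt_strictMono (f : ℕ → ℕ) : StrictMono (tInt f) :=
  strictMono_nat_of_lt_succ (fun k => by simp [tInt])

theorem tInt_le_self (f : ℕ → ℕ) : ∀ k, k ≤ tInt f k := by
  intro k
  induction k with
  | zero => simp [tInt]
  | succ k ih =>
    show k + 1 ≤ tInt f k + f (tInt f k) + 1
    omega

/-- Index of the interval containing `x`. -/
def idxI (f : ℕ → ℕ) (x : ℕ) : ℕ := Nat.findGreatest (fun i => tInt f i ≤ x) x

theorem tInt_idxI_le (f : ℕ → ℕ) (x : ℕ) : tInt f (idxI f x) ≤ x :=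
  Nat.findGreatest_spec (P := fun i => tInt f i ≤ x) (Nat.zero_le x) (by simp [tInt])

theorem lt_tInt_idxI_succ (f : ℕ → ℕ) (x : ℕ) : x < tInt f (idxI f x + 1) := by
  by_contra h
  push_neg at h
  have h1 : idxI f x + 1 ≤ x := le_trans (tInt_le_self f _) h
  exact Nat.findGreatest_is_greatest (P := fun i => tInt f i ≤ x)
    (Nat.lt_succ_self _) h1 h

theorem big_of_idxI {f : ℕ → ℕ} (hf : Monotone f) {x y : ℕ}
    (h : idxI f x + 2 ≤ idxI f y) : f x < y := by
  have h1 : tInt f (idxI f x + 2) ≤ tInt f (idxI f y) := (tInt_strictMono f).monotone h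
  have h2 : tInt f (idxI f y) ≤ y := tInt_idxI_le f y
  have h3 : x ≤ tInt f (idxI f x + 1) := le_of_lt (lt_tInt_idxI_succ f x)
  have h4 : f x ≤ f (tInt f (idxI f x + 1)) := hf h3
  have h5 : tInt f (idxI f x + 2) = tInt f (idxI f x + 1) + f (tInt f (idxI f x + 1)) + 1 := rfl
  omega

/-! ### Jump counting -/

/-- Number of "big jumps" (a skipped interval) between consecutive entries of a list. -/
def jumpsL (f : ℕ → ℕ) : List ℕ → ℕ
  | [] => 0
  | [_] => 0
  | x :: y :: r => (if idxI f x + 2 ≤ idxI f y then 1 else 0) + jumpsL f (y :: r)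

theorem jumpsL_append (f : ℕ → ℕ) :
    ∀ (l₁ l₂ : List ℕ) (h₁ : l₁ ≠ []) (h₂ : l₂ ≠ []),
      jumpsL f (l₁ ++ l₂) = jumpsL f l₁ + jumpsL f l₂ +
        (if idxI f (l₁.getLast h₁) + 2 ≤ idxI f (l₂.head h₂) then 1 else 0) := by
  intro l₁
  induction l₁ with
  | nil => intro l₂ h₁ _; exact absurd rfl h₁
  | cons a l ih =>
    intro l₂ h₁ h₂
    match l with
    | [] =>
      match l₂, h₂ with
      | z :: r, _ =>
        simp only [List.cons_append, List.nil_append, List.getLast_singleton, List.head_cons]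
        show (if idxI f a + 2 ≤ idxI f z then 1 else 0) + jumpsL f (z :: r)
            = jumpsL f [a] + jumpsL f (z :: r) + _
        simp [jumpsL]
        exact Nat.add_comm _ _
    | b :: r =>
      have hne : (b :: r) ≠ [] := by simp
      have h3 : jumpsL f ((a :: b :: r) ++ l₂)
          = (if idxI f a + 2 ≤ idxI f b then 1 else 0) + jumpsL f ((b :: r) ++ l₂) := rfl
      rw [h3, ih l₂ hne h₂]
      have h4 : jumpsL f (a :: b :: r)
          = (if idxI f a + 2 ≤ idxI f b then 1 else 0) + jumpsL f (b :: r) := rfl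
      rw [h4]
      have h5 : (a :: b :: r).getLast h₁ = (b :: r).getLast hne := by
        exact List.getLast_cons hne
      rw [h5]
      omega

/-- Number of big jumps of a finite set. -/
def jumps (f : ℕ → ℕ) (b : Finset ℕ) : ℕ := jumpsL f (b.sort (· ≤ ·))

theorem sort_ne_nil {u : Finset ℕ} (hu : u.Nonempty) : u.sort (· ≤ ·) ≠ [] := by
  intro h
  obtain ⟨x, hx⟩ := hu
  have : x ∈ u.sort (· ≤ ·) := (Finset.mem_sort _).mpr hx
  rw [h] at this
  exact List.not_mem_nil this

theorem sort_union {u v : Finset ℕ} (h : ∀ x ∈ u, ∀ y ∈ v, x < y) :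
    (u ∪ v).sort (· ≤ ·) = u.sort (· ≤ ·) ++ v.sort (· ≤ ·) := by
  have hdisj : Disjoint u v := by
    rw [Finset.disjoint_left]
    intro a hau hav
    exact lt_irrefl a (h a hau a hav)
  refine (fun hp hs => List.Perm.eq_of_pairwise' (Finset.pairwise_sort _ _) hs hp) ?_ ?_
  · rw [← Multiset.coe_eq_coe]
    have hval : (u ∪ v).val = u.val + v.val := by
      rw [← Finset.disjUnion_eq_union u v hdisj]; rfl
    calc ((u ∪ v).sort (· ≤ ·) : Multiset ℕ) = (u ∪ v).val := Finset.sort_eq _ _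
      _ = u.val + v.val := hval
      _ = ((u.sort (· ≤ ·) : List ℕ) : Multiset ℕ) + ((v.sort (· ≤ ·) : List ℕ) : Multiset ℕ) := by
          rw [Finset.sort_eq, Finset.sort_eq]
      _ = ((u.sort (· ≤ ·) ++ v.sort (· ≤ ·) : List ℕ) : Multiset ℕ) := by
          rw [← Multiset.coe_add]
  · rw [List.pairwise_append]
    refine ⟨Finset.pairwise_sort _ _, Finset.pairwise_sort _ _, fun x hx y hy => ?_⟩
    exact le_of_lt (h x ((Finset.mem_sort _).mp hx) y ((Finset.mem_sort _).mp hy))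

theorem head_le_sort' : ∀ (l : List ℕ) (hl : l ≠ []) (_ : l.Pairwise (· ≤ ·)) (x : ℕ),
    x ∈ l → l.head hl ≤ x := by
  intro l
  match l with
  | [] => intro h; exact absurd rfl h
  | a :: t =>
    intro _ hs x hx
    simp only [List.head_cons]
    rcases List.mem_cons.mp hx with h | h
    · omega
    · exact (List.pairwise_cons.mp hs).1 x h

theorem head_sort_le {u : Finset ℕ} (hu : u.Nonempty) {x : ℕ} (hx : x ∈ u) :
    (u.sort (· ≤ ·)).head (sort_ne_nil hu) ≤ x :=
  head_le_sort' _ _ (Finset.pairwise_sort _ _) x ((Finset.mem_sort _).mpr hx)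

theorem head_sort_mem {u : Finset ℕ} (hu : u.Nonempty) :
    (u.sort (· ≤ ·)).head (sort_ne_nil hu) ∈ u :=
  (Finset.mem_sort _).mp (List.head_mem _)

theorem le_getLast_sort' : ∀ (l : List ℕ) (hl : l ≠ []) (_ : l.Pairwise (· ≤ ·)) (x : ℕ),
    x ∈ l → x ≤ l.getLast hl := by
  intro l
  induction l with
  | nil => intro h; exact absurd rfl h
  | cons a t ih =>
    intro hl hs x hx
    match t with
    | [] => simp at hx; simp [hx, List.getLast_singleton]
    | b :: r =>
      have hne : (b :: r) ≠ [] := by simp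
      rw [List.getLast_cons hne]
      rcases List.mem_cons.mp hx with h | h
      · subst h
        have h1 : x ≤ (b :: r).getLast hne := by
          have := (List.pairwise_cons.mp hs).1
          exact this _ (List.getLast_mem hne)
        exact h1
      · exact ih hne (List.pairwise_cons.mp hs).2 x h

theorem le_getLast_sort {u : Finset ℕ} (hu : u.Nonempty) {x : ℕ} (hx : x ∈ u) :
    x ≤ (u.sort (· ≤ ·)).getLast (sort_ne_nil hu) :=
  le_getLast_sort' _ _ (Finset.pairwise_sort _ _) x ((Finset.mem_sort _).mpr hx)

theorem getLast_sort_mem {u : Finset ℕ} (hu : u.Nonempty) :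
    (u.sort (· ≤ ·)).getLast (sort_ne_nil hu) ∈ u :=
  (Finset.mem_sort _).mp (List.getLast_mem _)

theorem jumps_union (f : ℕ → ℕ) {u v : Finset ℕ} (hu : u.Nonempty) (hv : v.Nonempty)
    (h : ∀ x ∈ u, ∀ y ∈ v, x < y) :
    jumps f (u ∪ v) = jumps f u + jumps f v +
      (if idxI f ((u.sort (· ≤ ·)).getLast (sort_ne_nil hu)) + 2 ≤
          idxI f ((v.sort (· ≤ ·)).head (sort_ne_nil hv)) then 1 else 0) := by
  unfold jumps
  rw [sort_union h]
  exact jumpsL_append f _ _ (sort_ne_nil hu) (sort_ne_nil hv)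

end Stmt6Aux2
section Stmt6Aux3
open BlockPaper

/-- The odd-jump-parity class belongs to every ordered-union ultrafilter. -/
theorem odd_class_mem (U : Ultrafilter FIN) (hOU : OrderedUnion U) (f : ℕ → ℕ) :
    liftFIN {b : Finset ℕ | ¬ Even (jumps f b)} ∈ U := by
  by_contra hno
  have hc : liftFIN {b : Finset ℕ | Even (jumps f b)} ∈ U := by
    have h1 : (liftFIN {b : Finset ℕ | ¬ Even (jumps f b)})ᶜ ∈ U :=
      Ultrafilter.compl_mem_iff_notMem.mpr hno
    have h2 : (liftFIN {b : Finset ℕ | ¬ Even (jumps f b)})ᶜ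
        = liftFIN {b : Finset ℕ | Even (jumps f b)} := by
      ext a; simp [liftFIN]
    rwa [h2] at h1
  obtain ⟨E, hEb, _, hEsub⟩ := exists_block_subset U hOU hc
  -- contradiction via a far-apart union
  set u := E 0 with hu
  have hune : u.Nonempty := hEb.1 0
  set L := tInt f (idxI f ((u.sort (· ≤ ·)).getLast (sort_ne_nil hune)) + 2) + 1 with hL
  set v := E L with hv
  have hvne : v.Nonempty := hEb.1 L
  have hcross : ∀ x ∈ u, ∀ y ∈ v, x < y :=
    fun x hx y hy => blockF_cross hEb (Nat.succ_pos _) x hx y hy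
  have h0 : u ∈ finUnions E := entry_mem_finUnions E 0
  have h1 : v ∈ finUnions E := entry_mem_finUnions E L
  have h2 : u ∪ v ∈ finUnions E := union_mem_finUnions h0 h1
  have heu : Even (jumps f u) := hEsub h0
  have hev : Even (jumps f v) := hEsub h1
  have heuv : Even (jumps f (u ∪ v)) := hEsub h2
  rw [jumps_union f hune hvne hcross] at heuv
  -- the boundary term must be even, hence 0
  by_cases hbig : idxI f ((u.sort (· ≤ ·)).getLast (sort_ne_nil hune)) + 2 ≤
      idxI f ((v.sort (· ≤ ·)).head (sort_ne_nil hvne))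
  · rw [if_pos hbig] at heuv
    rcases heu with ⟨p, hp⟩; rcases hev with ⟨q, hq⟩; rcases heuv with ⟨w, hw⟩
    omega
  · -- boundary small: head of v is below tInt f (idx(top u) + 2) ≤ L, but elements of v are ≥ L
    push_neg at hbig
    set y := (v.sort (· ≤ ·)).head (sort_ne_nil hvne) with hy
    have hy1 : y < tInt f (idxI f y + 1) := lt_tInt_idxI_succ f y
    have hy2 : tInt f (idxI f y + 1)
        ≤ tInt f (idxI f ((u.sort (· ≤ ·)).getLast (sort_ne_nil hune)) + 2) :=
      (tInt_strictMono f).monotone (by omega)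
    have hy3 : y ∈ v := head_sort_mem hvne
    have hy4 : L ≤ y := blockF_ge hEb L y hy3
    omega

/-- Separation lemma: every ordered-union ultrafilter contains a block whose consecutive
entries are `f`-separated, inside any prescribed large set. -/
theorem exists_separated_block (U : Ultrafilter FIN) (hOU : OrderedUnion U)
    {W : Set (Finset ℕ)} (hW : liftFIN W ∈ U) {f : ℕ → ℕ} (hf : Monotone f) :
    ∃ D : ℕ → Finset ℕ, IsBlockF D ∧ liftFIN (finUnions D) ∈ U ∧ finUnions D ⊆ W ∧
      (∀ x ∈ D 0, f 0 < x) ∧ (∀ k, ∀ y ∈ D k, ∀ x ∈ D (k + 1), f y < x) := by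
  have h1 : liftFIN ({b : Finset ℕ | ¬ Even (jumps f b)} ∩ {b | ∀ x ∈ b, f 0 < x}) ∈ U := by
    rw [liftFIN_inter]
    exact Filter.inter_mem (odd_class_mem U hOU f) (allAbove_mem U hOU (f 0))
  have h2 : liftFIN (W ∩ ({b : Finset ℕ | ¬ Even (jumps f b)} ∩ {b | ∀ x ∈ b, f 0 < x})) ∈ U := by
    rw [liftFIN_inter]
    exact Filter.inter_mem hW h1
  obtain ⟨D, hDb, hDU, hDsub⟩ := exists_block_subset U hOU h2
  refine ⟨D, hDb, hDU, fun b hb => (hDsub hb).1, ?_, ?_⟩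
  · intro x hx
    exact (hDsub (entry_mem_finUnions D 0)).2.2 x hx
  · intro k y hy x hx
    set u := D k with hu
    set v := D (k + 1) with hv
    have hune : u.Nonempty := hDb.1 k
    have hvne : v.Nonempty := hDb.1 (k + 1)
    have hcross : ∀ a ∈ u, ∀ b ∈ v, a < b := hDb.2 k
    have h0 : u ∈ finUnions D := entry_mem_finUnions D k
    have h1' : v ∈ finUnions D := entry_mem_finUnions D (k + 1)
    have h2' : u ∪ v ∈ finUnions D := union_mem_finUnions h0 h1'
    have hou : ¬ Even (jumps f u) := (hDsub h0).2.1
    have hov : ¬ Even (jumps f v) := (hDsub h1').2.1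
    have houv : ¬ Even (jumps f (u ∪ v)) := (hDsub h2').2.1
    rw [jumps_union f hune hvne hcross] at houv
    by_cases hbig : idxI f ((u.sort (· ≤ ·)).getLast (sort_ne_nil hune)) + 2 ≤
        idxI f ((v.sort (· ≤ ·)).head (sort_ne_nil hvne))
    · -- big boundary gives the separation
      have hstep : f ((u.sort (· ≤ ·)).getLast (sort_ne_nil hune))
          < (v.sort (· ≤ ·)).head (sort_ne_nil hvne) := big_of_idxI hf hbig
      have hy1 : y ≤ (u.sort (· ≤ ·)).getLast (sort_ne_nil hune) := le_getLast_sort hune hy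
      have hx1 : (v.sort (· ≤ ·)).head (sort_ne_nil hvne) ≤ x := head_sort_le hvne hx
      have := hf hy1
      omega
    · exfalso
      rw [if_neg hbig] at houv
      rcases Nat.even_or_odd (jumps f u) with he | ho
      · exact hou he
      rcases Nat.even_or_odd (jumps f v) with he | ho' 
      · exact hov he
      rcases ho with ⟨p, hp⟩; rcases ho' with ⟨q, hq⟩
      exact houv ⟨p + q + 1, by omega⟩

end Stmt6Aux3
section Stmt6Aux4
open BlockPaper

/-! ### List utilities -/

theorem ofFn_getD {β : Type*} (l : List β) (d : β) {n : ℕ} (h : l.length = n) :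
    (List.ofFn fun i : Fin n => l.getD i d) = l := by
  subst h
  apply List.ext_getElem (by simp)
  intro i h1 h2
  rw [List.getElem_ofFn]
  exact List.getD_eq_getElem l d h2

theorem getD_append_last {β : Type*} (p : List β) (x d : β) :
    (p ++ [x]).getD p.length d = x := by
  rw [List.getD_eq_getElem _ _ (by simp)]
  exact List.getElem_concat_length rfl _

/-! ### Finite block lists -/

theorem blocklistF_tail {a : Finset ℕ} {r : List (Finset ℕ)} (h : IsBlockListF (a :: r)) :
    IsBlockListF r :=
  ⟨fun b hb => h.1 b (List.mem_cons_of_mem _ hb), (List.isChain_cons.mp h.2).2⟩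

theorem blocklistF_above {a : Finset ℕ} {r : List (Finset ℕ)} (h : IsBlockListF (a :: r)) :
    ∀ b ∈ r, ∀ j ∈ b, ∀ i ∈ a, i < j := by
  induction r generalizing a with
  | nil => intro b hb; simp at hb
  | cons c r ih =>
    intro b hb j hj i hi
    have hrel : ∀ i ∈ a, ∀ j ∈ c, i < j := (List.isChain_cons_cons.mp h.2).1
    rcases List.mem_cons.mp hb with hbc | hbr
    · subst hbc; exact hrel i hi j hj
    · obtain ⟨m, hm⟩ : c.Nonempty := h.1 c (by simp)
      have htail : IsBlockListF (c :: r) := blocklistF_tail h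
      exact lt_trans (hrel i hi m hm) (ih htail b hbr j hj m hm)

theorem blocklistF_length : ∀ (s : List (Finset ℕ)), IsBlockListF s →
    ∀ (lo M : ℕ), (∀ a ∈ s, ∀ x ∈ a, lo ≤ x ∧ x < M) → s.length ≤ M - lo := by
  intro s
  induction s with
  | nil => intro _ lo M _; simp
  | cons a r ih =>
    intro h lo M hel
    obtain ⟨x₀, hx₀⟩ : a.Nonempty := h.1 a (by simp)
    have hx₀b : lo ≤ x₀ ∧ x₀ < M := hel a (by simp) x₀ hx₀
    have hr : ∀ b ∈ r, ∀ x ∈ b, x₀ + 1 ≤ x ∧ x < M := by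
      intro b hb x hx
      refine ⟨blocklistF_above h b hb x hx x₀ hx₀, (hel b (List.mem_cons_of_mem _ hb) x hx).2⟩
    have := ih (blocklistF_tail h) (x₀ + 1) M hr
    simp only [List.length_cons]
    omega

theorem finite_bounded_lists {β : Type*} (P : Finset β) :
    ∀ n : ℕ, Set.Finite {l : List β | (∀ a ∈ l, a ∈ P) ∧ l.length ≤ n} := by
  intro n
  induction n with
  | zero =>
    apply Set.Finite.subset (Set.finite_singleton ([] : List β))
    intro l hl
    rcases hl with ⟨_, hlen⟩
    simp only [Nat.le_zero, List.length_eq_zero_iff] at hlen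
    simp [hlen]
  | succ n ih =>
    apply Set.Finite.subset
      (Set.Finite.insert ([] : List β)
        (Set.Finite.image2 List.cons P.finite_toSet ih))
    intro l hl
    rcases hl with ⟨hmem, hlen⟩
    match l with
    | [] => exact Set.mem_insert _ _
    | a :: t =>
      refine Set.mem_insert_of_mem _ (Set.mem_image2_of_mem (hmem a (by simp)) ?_)
      exact ⟨fun b hb => hmem b (List.mem_cons_of_mem _ hb), by simpa using Nat.lt_succ_iff.mp hlen⟩

/-- The set of finite block lists with all elements below `m`. -/
def HsetL (m : ℕ) : Set (List (Finset ℕ)) :=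
  {s | IsBlockListF s ∧ ∀ a ∈ s, ∀ x ∈ a, x ≤ m}

theorem finite_HsetL (m : ℕ) : Set.Finite (HsetL m) := by
  apply Set.Finite.subset (finite_bounded_lists ((Finset.range (m + 1)).powerset) (m + 1))
  intro s hs
  refine ⟨?_, ?_⟩
  · intro a ha
    rw [Finset.mem_powerset]
    intro x hx
    rw [Finset.mem_range]
    exact Nat.lt_succ_of_le (hs.2 a ha x hx)
  · have := blocklistF_length s hs.1 0 (m + 1)
      (fun a ha x hx => ⟨Nat.zero_le x, Nat.lt_succ_of_le (hs.2 a ha x hx)⟩)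
    omega

theorem HsetL_mono {m m' : ℕ} (h : m ≤ m') : HsetL m ⊆ HsetL m' :=
  fun s hs => ⟨hs.1, fun a ha x hx => le_trans (hs.2 a ha x hx) h⟩

end Stmt6Aux4
section Stmt6Aux5
open BlockPaper

variable (U : Ultrafilter FIN) (A : ℕ → Finset ℕ) (α : List (ℕ → Finset ℕ) → Finset ℕ)

/-- The set of possible responses of `α` to a `U`-large legal move at position `p`. -/
def SPos (p : List (ℕ → Finset ℕ)) : Set (Finset ℕ) :=
  {b | ∃ Y : ℕ → Finset ℕ, (IsBlockF Y ∧ PLEF Y A) ∧ liftFIN (finUnions Y) ∈ U ∧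
    α (p ++ [Y]) = b}

/-- A chosen witness move realizing response `b` at position `p`. -/
noncomputable def witF (p : List (ℕ → Finset ℕ)) (b : Finset ℕ) : ℕ → Finset ℕ := by
  classical
  exact if h : b ∈ SPos U A α p then h.choose else A

theorem witF_legal (hA : IsBlockF A) (p : List (ℕ → Finset ℕ)) (b : Finset ℕ) :
    IsBlockF (witF U A α p b) ∧ PLEF (witF U A α p b) A := by
  classical
  unfold witF
  split
  · next h => exact h.choose_spec.1
  · exact ⟨hA, fun c hc => hc⟩

theorem witF_memU (hAU : liftFIN (finUnions A) ∈ U) (p : List (ℕ → Finset ℕ)) (b : Finset ℕ) :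
    liftFIN (finUnions (witF U A α p b)) ∈ U := by
  classical
  unfold witF
  split
  · next h => exact h.choose_spec.2.1
  · exact hAU

theorem witF_eq (p : List (ℕ → Finset ℕ)) {b : Finset ℕ} (h : b ∈ SPos U A α p) :
    α (p ++ [witF U A α p b]) = b := by
  classical
  unfold witF
  rw [dif_pos h]
  exact h.choose_spec.2.2

/-- The reversed position built from a reversed list of responses. -/
noncomputable def rposF : List (Finset ℕ) → List (ℕ → Finset ℕ)
  | [] => []
  | b :: s => witF U A α (rposF s).reverse b :: rposF s

/-- The position (list of I's moves) built from a list of responses. -/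
noncomputable def posF (s : List (Finset ℕ)) : List (ℕ → Finset ℕ) :=
  (rposF U A α s.reverse).reverse

theorem posF_nil : posF U A α [] = [] := rfl

theorem posF_concat (s : List (Finset ℕ)) (b : Finset ℕ) :
    posF U A α (s ++ [b]) = posF U A α s ++ [witF U A α (posF U A α s) b] := by
  unfold posF
  rw [List.reverse_append]
  simp only [List.reverse_cons, List.reverse_nil, List.nil_append, List.singleton_append]
  show (witF U A α (rposF U A α s.reverse).reverse b :: rposF U A α s.reverse).reverse = _
  rw [List.reverse_cons]

theorem rposF_mem (s : List (Finset ℕ)) :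
    ∀ Y ∈ rposF U A α s, ∃ p b, Y = witF U A α p b := by
  induction s with
  | nil => intro Y hY; simp [rposF] at hY
  | cons c s ih =>
    intro Y hY
    rcases List.mem_cons.mp hY with h | h
    · exact ⟨_, _, h⟩
    · exact ih Y h

theorem posF_legal (hA : IsBlockF A) (s : List (Finset ℕ)) :
    ∀ Y ∈ posF U A α s, IsBlockF Y ∧ PLEF Y A := by
  intro Y hY
  rw [posF, List.mem_reverse] at hY
  obtain ⟨p, b, rfl⟩ := rposF_mem U A α s.reverse Y hY
  exact witF_legal U A α hA p b

end Stmt6Aux5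
/-- A stable ordered-union ultrafilter on `FIN` is strategic. -/
theorem stmt6 (U : Ultrafilter FIN) (hOU : OrderedUnion U) (hSt : Stable U) :
    ∀ A : ℕ → Finset ℕ, IsBlockF A → liftFIN (finUnions A) ∈ U →
      ∀ α : List (ℕ → Finset ℕ) → Finset ℕ,
        IsStratIIF (fun B => IsBlockF B ∧ PLEF B A) α →
        ∃ Bs : ℕ → ℕ → Finset ℕ, (∀ k, IsBlockF (Bs k) ∧ PLEF (Bs k) A) ∧
          liftFIN (finUnions (outcomeOf α Bs)) ∈ U := by
  intro A hA hAU α hα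
  classical
  -- Step 1: reachability: at any legal position, the set of α-responses to
  -- U-large legal moves is U-large.
  have hSmem : ∀ p : List (ℕ → Finset ℕ), (∀ Y ∈ p, IsBlockF Y ∧ PLEF Y A) →
      liftFIN (SPos U A α p) ∈ U := by
    intro p hp
    by_contra hno
    have hcomp : liftFIN {b : Finset ℕ | b ∉ SPos U A α p} ∈ U := by
      rw [liftFIN_compl]
      exact Ultrafilter.compl_mem_iff_notMem.mpr hno
    have hint : liftFIN ({b : Finset ℕ | b ∉ SPos U A α p} ∩ finUnions A) ∈ U := by
      rw [liftFIN_inter]; exact Filter.inter_mem hcomp hAU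
    obtain ⟨Y₀, hY₀b, hY₀U, hY₀sub⟩ := exists_block_subset U hOU hint
    have hY₀A : PLEF Y₀ A := fun b hb => (hY₀sub hb).2
    set l : List (ℕ → Finset ℕ) := p ++ [Y₀] with hl
    set Bs : ℕ → (ℕ → Finset ℕ) := fun k => l.getD k A with hBs
    have hlegal : ∀ k, IsBlockF (Bs k) ∧ PLEF (Bs k) A := by
      intro k
      by_cases hk : k < l.length
      · have hmem : Bs k ∈ l := by
          rw [hBs]
          simp only
          rw [List.getD_eq_getElem l A hk]
          exact List.getElem_mem hk
        rcases List.mem_append.mp hmem with h | h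
        · exact hp _ h
        · have h' := List.mem_singleton.mp h
          rw [h']; exact ⟨hY₀b, hY₀A⟩
      · push_neg at hk
        have hBsk : Bs k = A := List.getD_eq_default l A hk
        rw [hBsk]; exact ⟨hA, fun c hc => hc⟩
    have hout := (hα Bs hlegal).2 p.length
    have h1 : (List.ofFn fun i : Fin (p.length + 1) => Bs i) = l :=
      ofFn_getD l A (by rw [hl]; simp)
    have h2 : Bs p.length = Y₀ := getD_append_last p Y₀ A
    have heq : outcomeOf α Bs p.length = α l := by
      unfold outcomeOf
      rw [h1]
    rw [heq, h2] at hout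
    have hmem : α l ∈ SPos U A α p := ⟨Y₀, ⟨hY₀b, hY₀A⟩, hY₀U, rfl⟩
    exact (hY₀sub hout).1 hmem
  -- Step 2: enumeration of histories and blocks inside reachable sets
  obtain ⟨e, he⟩ := exists_surjective_nat (List (Finset ℕ))
  have hTn : ∀ n : ℕ, liftFIN (SPos U A α (posF U A α (e n))) ∈ U :=
    fun n => hSmem _ (posF_legal U A α hA (e n))
  choose X hXb hXU hXsub using fun n => exists_block_subset U hOU (hTn n)
  -- Step 3: stability
  obtain ⟨B, hBb, hBU, hBle⟩ := hSt X (fun n => ⟨hXb n, hXU n⟩)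
  have hBle' : ∀ n, ∃ m, finUnionsAbove B m ⊆ finUnions (X n) := fun n => hBle n
  choose ν hν using hBle'
  -- Step 4: the separation function
  choose ι hι using he
  set f : ℕ → ℕ := fun m => m + 1 + ((finite_HsetL m).toFinset.sup fun s => ν (ι s)) with hf
  have hfmono : Monotone f := by
    intro m m' hmm
    have hsup : ((finite_HsetL m).toFinset.sup fun s => ν (ι s))
        ≤ ((finite_HsetL m').toFinset.sup fun s => ν (ι s)) := by
      apply Finset.sup_mono
      intro s hs
      rw [Set.Finite.mem_toFinset] at hs ⊢
      exact HsetL_mono hmm hs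
    simp only [hf]
    omega
  have hfbound : ∀ m : ℕ, ∀ s ∈ HsetL m, ν (ι s) < f m := by
    intro m s hs
    have h1 : ν (ι s) ≤ (finite_HsetL m).toFinset.sup fun s => ν (ι s) :=
      Finset.le_sup (f := fun s => ν (ι s)) ((finite_HsetL m).mem_toFinset.mpr hs)
    simp only [hf]
    omega
  -- Step 5: the separated block
  obtain ⟨D, hDb, hDU, hDsub, hD0, hDsep⟩ := exists_separated_block U hOU hBU hfmono
  -- Step 6: positions along prefixes of D
  set P : ℕ → List (ℕ → Finset ℕ) :=
    fun k => posF U A α (List.ofFn fun i : Fin k => D i) with hP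
  have hpref : ∀ k : ℕ, (List.ofFn fun i : Fin (k+1) => D i)
      = (List.ofFn fun i : Fin k => D i) ++ [D k] := by
    intro k
    rw [List.ofFn_succ']
    simp [List.concat_eq_append]
  have hPsucc : ∀ k, P (k + 1) = P k ++ [witF U A α (P k) (D k)] := by
    intro k
    rw [hP]
    simp only
    rw [hpref k, posF_concat]
  have hprefBL : ∀ k, IsBlockListF (List.ofFn fun i : Fin k => D i) := by
    intro k
    constructor
    · intro a ha
      rw [List.mem_ofFn] at ha
      obtain ⟨i, rfl⟩ := ha
      exact hDb.1 i
    · show List.IsChain _ _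
      rw [List.isChain_iff_getElem]
      intro i hi
      simp only [List.getElem_ofFn]
      exact hDb.2 i
  -- Step 7: each entry of D is reachable at the corresponding position
  have hkey : ∀ k, D k ∈ SPos U A α (P k) := by
    intro k
    cases k with
    | zero =>
      have hmem0 : ([] : List (Finset ℕ)) ∈ HsetL 0 :=
        ⟨⟨by simp, List.isChain_nil⟩, by simp⟩
      have hb : ν (ι []) < f 0 := hfbound 0 [] hmem0
      have habove : ∀ x ∈ D 0, ν (ι []) < x := fun x hx => lt_trans hb (hD0 x hx)
      have h1 : D 0 ∈ finUnionsAbove B (ν (ι [])) :=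
        mem_finUnionsAbove (hDsub (entry_mem_finUnions D 0)) habove
      have h2 : D 0 ∈ finUnions (X (ι [])) := hν (ι []) h1
      have h3 : D 0 ∈ SPos U A α (posF U A α (e (ι []))) := hXsub (ι []) h2
      rw [hι []] at h3
      have hP0 : P 0 = posF U A α [] := by rw [hP]; simp [List.ofFn_zero]
      rw [hP0]
      exact h3
    | succ k =>
      set m := (D k).max' (hDb.1 k) with hm
      set s : List (Finset ℕ) := List.ofFn fun i : Fin (k+1) => D i with hs
      have hsmem : s ∈ HsetL m := by
        refine ⟨hprefBL (k+1), ?_⟩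
        intro a ha x hx
        rw [hs, List.mem_ofFn] at ha
        obtain ⟨i, rfl⟩ := ha
        have hx' : x ∈ D (i : ℕ) := hx
        rcases Nat.lt_succ_iff_lt_or_eq.mp i.isLt with h | h
        · exact le_of_lt
            (blockF_cross hDb h x hx' _ ((D k).max'_mem (hDb.1 k)))
        · have hik : (i : ℕ) = k := h
          rw [hik] at hx'
          exact Finset.le_max' _ x hx' 
      have hb : ν (ι s) < f m := hfbound m s hsmem
      have habove : ∀ x ∈ D (k+1), ν (ι s) < x := by
        intro x hx
        have h1 : f m < x := hDsep k m ((D k).max'_mem (hDb.1 k)) x hx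
        omega
      have h1 : D (k+1) ∈ finUnionsAbove B (ν (ι s)) :=
        mem_finUnionsAbove (hDsub (entry_mem_finUnions D (k+1))) habove
      have h2 : D (k+1) ∈ finUnions (X (ι s)) := hν (ι s) h1
      have h3 : D (k+1) ∈ SPos U A α (posF U A α (e (ι s))) := hXsub (ι s) h2
      rw [hι s] at h3
      exact h3
  -- Step 8: conclusion
  refine ⟨fun k => witF U A α (P k) (D k), fun k => witF_legal U A α hA _ _, ?_⟩
  have hofn : ∀ k, (List.ofFn fun i : Fin k => witF U A α (P i) (D i)) = P k := by
    intro k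
    induction k with
    | zero =>
      rw [hP]
      simp [List.ofFn_zero, posF_nil]
    | succ k ih =>
      rw [List.ofFn_succ']
      simp only [List.concat_eq_append, Fin.coe_castSucc, Fin.val_last]
      rw [ih, hPsucc k]
  have houtcome : outcomeOf α (fun k => witF U A α (P k) (D k)) = D := by
    funext k
    show α (List.ofFn fun i : Fin (k+1) => witF U A α (P i) (D i)) = D k
    rw [hofn (k+1), hPsucc k]
    exact witF_eq U A α (P k) (hkey k)
  rw [houtcome]
  exact hDU
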